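/- Let n ∈ ℕ, q > 0, t > 0 and set γ = 1/(nq). Then the best concentrated-real-pole rational approximation error equals a best polynomial approximation error on [−1, 1]: ρ_n^t(q) = inf_{p ∈ P_n} sup_{ŵ ∈ [−1, 1]} |p(ŵ) − E_t(ŵ)|, where E_t(ŵ) = exp(−t·(1 + ŵ)/(γ(1 − ŵ))) for ŵ ∈ [−1, 1) and E_t(1) = 0 (the value 0 at ŵ = 1 removes the singularity of the exponential expression). -/
import Mathlib


open Filter Set

/-- Best uniform approximation error of `exp(-t z)` on `[0, ∞)` by real rational
functions `p(z)/(z + n q)^n` with `p` of degree at most `n`. -/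
noncomputable def rho (n : ℕ) (t q : ℝ) : ℝ :=
  sInf {e : ℝ | ∃ p : Polynomial ℝ, p.degree ≤ n ∧
    e = sSup {y : ℝ | ∃ z : ℝ, 0 ≤ z ∧
      y = |p.eval z / (z + n * q) ^ n - Real.exp (-t * z)|}}

open Polynomial Topology in
/-- The transplanted polynomial in the variable `w`: if `z = (1+w)/(γ(1-w))`, then
`p(z)/(z + 1/γ)^n = (Tpoly n γ p)(w)`. -/
noncomputable def Tpoly (n : ℕ) (γ : ℝ) (p : Polynomial ℝ) : Polynomial ℝ :=
  ∑ k ∈ Finset.range (n+1), C (p.coeff k * γ^(n-k) / 2^n) * (1 + X)^k * (1 - X)^(n-k)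

open Polynomial Topology in
/-- The inverse transplantation: `(Spoly n γ p)(z)/(z + 1/γ)^n = p(w)`. -/
noncomputable def Spoly (n : ℕ) (γ : ℝ) (p : Polynomial ℝ) : Polynomial ℝ :=
  ∑ k ∈ Finset.range (n+1), C (p.coeff k / γ^n) * (C γ * X - 1)^k * (C γ * X + 1)^(n-k)

open Polynomial Topology in
lemma Tpoly_degree_le (n : ℕ) (γ : ℝ) (p : Polynomial ℝ) :
    (Tpoly n γ p).degree ≤ (n : WithBot ℕ) := by
  refine (Polynomial.degree_sum_le _ _).trans (Finset.sup_le fun k hk => ?_)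
  have hk' : k ≤ n := Nat.lt_succ_iff.mp (Finset.mem_range.mp hk)
  have : (C (p.coeff k * γ^(n-k) / 2^n) * (1+X)^k * (1-X:ℝ[X])^(n-k)).degree
      ≤ ((k + (n-k) : ℕ) : WithBot ℕ) := by
    compute_degree
    push_cast; rfl
  rwa [Nat.add_sub_cancel' hk'] at this

open Polynomial Topology in
lemma Spoly_degree_le (n : ℕ) (γ : ℝ) (p : Polynomial ℝ) :
    (Spoly n γ p).degree ≤ (n : WithBot ℕ) := by
  refine (Polynomial.degree_sum_le _ _).trans (Finset.sup_le fun k hk => ?_)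
  have hk' : k ≤ n := Nat.lt_succ_iff.mp (Finset.mem_range.mp hk)
  have : (C (p.coeff k / γ^n) * (C γ * X - 1)^k * (C γ * X + 1 : ℝ[X])^(n-k)).degree
      ≤ ((k + (n-k) : ℕ) : WithBot ℕ) := by
    compute_degree
    push_cast; rfl
  rwa [Nat.add_sub_cancel' hk'] at this

open Polynomial Topology in
lemma Tpoly_eval (n : ℕ) (γ : ℝ) (hγ : 0 < γ) (p : Polynomial ℝ)
    (hp : p.degree ≤ (n : WithBot ℕ)) (w : ℝ) (hw1 : -1 ≤ w) (hw2 : w < 1) :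
    (Tpoly n γ p).eval w
      = p.eval ((1+w)/(γ*(1-w))) / ((1+w)/(γ*(1-w)) + 1/γ)^n := by
  have hs : (0:ℝ) < 1 - w := by linarith
  set z : ℝ := (1+w)/(γ*(1-w)) with hz
  have hγs : γ * (1 - w) ≠ 0 := by positivity
  have hzden : z + 1/γ = 2/(γ*(1-w)) := by
    rw [hz]; field_simp; ring
  have hnd : p.natDegree < n + 1 := Nat.lt_succ_iff.mpr (Polynomial.natDegree_le_iff_degree_le.mpr hp)
  rw [Tpoly, Polynomial.eval_eq_sum_range' hnd, Polynomial.eval_finset_sum, Finset.sum_div]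
  refine Finset.sum_congr rfl fun k hk => ?_
  have hk' : k ≤ n := Nat.lt_succ_iff.mp (Finset.mem_range.mp hk)
  obtain ⟨j, hj⟩ : ∃ j, n = k + j := ⟨n - k, (Nat.add_sub_cancel' hk').symm⟩
  simp only [Polynomial.eval_mul, Polynomial.eval_pow, Polynomial.eval_add, Polynomial.eval_sub,
    Polynomial.eval_one, Polynomial.eval_C, Polynomial.eval_X]
  rw [hzden, hz]
  subst hj
  simp only [Nat.add_sub_cancel_left]
  rw [div_pow, div_pow, pow_add]
  simp only [mul_pow]
  field_simp
  ring

open Polynomial Topology in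
lemma Spoly_eval (n : ℕ) (γ : ℝ) (hγ : 0 < γ) (p : Polynomial ℝ)
    (hp : p.degree ≤ (n : WithBot ℕ)) (w : ℝ) (hw1 : -1 ≤ w) (hw2 : w < 1) :
    (Spoly n γ p).eval ((1+w)/(γ*(1-w)))
      = p.eval w * ((1+w)/(γ*(1-w)) + 1/γ)^n := by
  have hs : (0:ℝ) < 1 - w := by linarith
  set z : ℝ := (1+w)/(γ*(1-w)) with hz
  have hγs : γ * (1 - w) ≠ 0 := by positivity
  have hzden : z + 1/γ = 2/(γ*(1-w)) := by rw [hz]; field_simp; ring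
  have hz1 : γ * z - 1 = 2*w/(1-w) := by rw [hz]; field_simp; ring
  have hz2 : γ * z + 1 = 2/(1-w) := by rw [hz]; field_simp; ring
  have hnd : p.natDegree < n + 1 := Nat.lt_succ_iff.mpr (Polynomial.natDegree_le_iff_degree_le.mpr hp)
  rw [Spoly, Polynomial.eval_eq_sum_range' hnd, Polynomial.eval_finset_sum, Finset.sum_mul]
  refine Finset.sum_congr rfl fun k hk => ?_
  have hk' : k ≤ n := Nat.lt_succ_iff.mp (Finset.mem_range.mp hk)
  obtain ⟨j, hj⟩ : ∃ j, n = k + j := ⟨n - k, (Nat.add_sub_cancel' hk').symm⟩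
  simp only [Polynomial.eval_mul, Polynomial.eval_pow, Polynomial.eval_add, Polynomial.eval_sub,
    Polynomial.eval_one, Polynomial.eval_C, Polynomial.eval_X]
  rw [hzden, hz1, hz2]
  subst hj
  simp only [Nat.add_sub_cancel_left]
  rw [div_pow, div_pow, div_pow, pow_add, pow_add]
  simp only [mul_pow]
  field_simp
  ring

open Polynomial Topology in
/-- Correspondence of the two uniform errors under the Möbius change of variable. -/
lemma sup_corr (n : ℕ) (γ t : ℝ) (hγ0 : 0 < γ) (ht : 0 < t) (E : ℝ → ℝ)
    (hE : ∀ w : ℝ, -1 ≤ w → w < 1 → E w = Real.exp (-t * (1 + w) / (γ * (1 - w))))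
    (hE1 : E 1 = 0) (p q : Polynomial ℝ)
    (hcorr : ∀ w : ℝ, -1 ≤ w → w < 1 →
      q.eval w = p.eval ((1+w)/(γ*(1-w))) / ((1+w)/(γ*(1-w)) + 1/γ)^n) :
    sSup {y : ℝ | ∃ z : ℝ, 0 ≤ z ∧ y = |p.eval z / (z + 1/γ) ^ n - Real.exp (-t * z)|}
      = sSup {y : ℝ | ∃ w ∈ Set.Icc (-1:ℝ) 1, y = |q.eval w - E w|} := by
  set A := {y : ℝ | ∃ z : ℝ, 0 ≤ z ∧ y = |p.eval z / (z + 1/γ) ^ n - Real.exp (-t * z)|} with hA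
  set B := {y : ℝ | ∃ w ∈ Set.Icc (-1:ℝ) 1, y = |q.eval w - E w|} with hB
  have hmem : ∀ w : ℝ, -1 ≤ w → w < 1 →
      |q.eval w - E w|
        = |p.eval ((1+w)/(γ*(1-w))) / ((1+w)/(γ*(1-w)) + 1/γ) ^ n
            - Real.exp (-t * ((1+w)/(γ*(1-w))))| := by
    intro w h1 h2
    rw [hcorr w h1 h2, hE w h1 h2, mul_div_assoc]
  have hznn : ∀ w : ℝ, -1 ≤ w → w < 1 → 0 ≤ (1+w)/(γ*(1-w)) := by
    intro w h1 h2
    have : (0:ℝ) < γ * (1 - w) := by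
      have : (0:ℝ) < 1 - w := by linarith
      positivity
    exact div_nonneg (by linarith) this.le
  have hinv : ∀ z : ℝ, 0 ≤ z → ∃ w : ℝ, -1 ≤ w ∧ w < 1 ∧ (1+w)/(γ*(1-w)) = z := by
    intro z hz
    have hD : (0:ℝ) < γ * z + 1 := by positivity
    refine ⟨(γ*z-1)/(γ*z+1), ?_, ?_, ?_⟩
    · rw [le_div_iff₀ hD]; nlinarith
    · rw [div_lt_one hD]; linarith
    · have e1 : 1 + (γ*z-1)/(γ*z+1) = (2*γ)*z/(γ*z+1) := by field_simp; ring
      have e2 : γ*(1 - (γ*z-1)/(γ*z+1)) = (2*γ)/(γ*z+1) := by field_simp; ring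
      rw [e1, e2, div_div_div_cancel_right₀, mul_div_cancel_left₀]
      all_goals positivity
  have hA_ne : A.Nonempty := ⟨_, 0, le_rfl, rfl⟩
  have hB_ne : B.Nonempty := ⟨_, 1, ⟨by norm_num, le_rfl⟩, rfl⟩
  have hA_sub : A ⊆ B := by
    rintro y ⟨z, hz, rfl⟩
    obtain ⟨w, h1, h2, hw⟩ := hinv z hz
    refine ⟨w, ⟨h1, h2.le⟩, ?_⟩
    rw [hmem w h1 h2, hw]
  obtain ⟨C, hC⟩ := (isCompact_Icc (a := (-1:ℝ)) (b := 1)).exists_bound_of_continuousOn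
    (Polynomial.continuous q).continuousOn
  have hEbd : ∀ w ∈ Set.Icc (-1:ℝ) 1, |E w| ≤ 1 := by
    rintro w ⟨h1, h2⟩
    rcases h2.lt_or_eq with h2 | h2
    · rw [hE w h1 h2, abs_of_pos (Real.exp_pos _)]
      apply Real.exp_le_one_iff.mpr
      apply div_nonpos_iff.mpr
      refine Or.inr ⟨by nlinarith, by nlinarith⟩
    · rw [h2, hE1]; norm_num
  have hB_bdd : BddAbove B := by
    refine ⟨C + 1, ?_⟩
    rintro y ⟨w, hw, rfl⟩
    calc |q.eval w - E w| ≤ |q.eval w| + |E w| := abs_sub _ _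
      _ ≤ C + 1 := add_le_add (by simpa using hC w hw) (hEbd w hw)
  have hA_bdd : BddAbove A := hB_bdd.mono hA_sub
  refine le_antisymm (csSup_le_csSup hB_bdd hA_ne hA_sub) (csSup_le hB_ne ?_)
  rintro y ⟨w, ⟨h1, h2⟩, rfl⟩
  rcases h2.lt_or_eq with h2 | h2
  · exact le_csSup hA_bdd ⟨_, hznn w h1 h2, hmem w h1 h2⟩
  clear h1; subst h2
  set l := nhdsWithin (1:ℝ) (Set.Ico (-1:ℝ) 1) with hl
  have hne : l.NeBot := by
    refine mem_closure_iff_nhdsWithin_neBot.mp ?_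
    rw [closure_Ico (by norm_num : (-1:ℝ) ≠ 1)]
    exact ⟨by norm_num, le_rfl⟩
  have hev : ∀ᶠ w in l, w ∈ Set.Ico (-1:ℝ) 1 := eventually_mem_nhdsWithin
  have htend1 : Tendsto (fun w => q.eval w) l (𝓝 (q.eval 1)) :=
    ((Polynomial.continuous q).tendsto 1).mono_left nhdsWithin_le_nhds
  have htend2 : Tendsto E l (𝓝 0) := by
    have hden : Tendsto (fun w : ℝ => (γ*(1-w))⁻¹) l atTop := by
      apply tendsto_inv_nhdsGT_zero.comp
      rw [tendsto_nhdsWithin_iff]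
      constructor
      · have h0 : Tendsto (fun w : ℝ => γ*(1-w)) (𝓝 1) (𝓝 (γ*(1-1))) :=
          (continuous_const.mul (continuous_const.sub continuous_id)).tendsto 1
        simpa using h0.mono_left nhdsWithin_le_nhds
      · filter_upwards [hev] with w hw
        have : (0:ℝ) < 1 - w := by linarith [hw.2]
        exact Set.mem_Ioi.mpr (by positivity)
    have hnum : Tendsto (fun w : ℝ => -t * (1+w)) l (𝓝 (-t*(1+1))) :=
      ((continuous_const.mul (continuous_const.add continuous_id)).tendsto 1).mono_left
        nhdsWithin_le_nhds
    have hg : Tendsto (fun w : ℝ => -t * (1+w) / (γ*(1-w))) l atBot := by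
      have := hnum.neg_mul_atTop (by nlinarith : -t*(1+1) < 0) hden
      simpa [div_eq_mul_inv] using this
    have hx : Tendsto (fun w : ℝ => Real.exp (-t*(1+w)/(γ*(1-w)))) l (𝓝 0) :=
      Real.tendsto_exp_atBot.comp hg
    refine hx.congr' ?_
    filter_upwards [hev] with w hw
    exact (hE w hw.1 hw.2).symm
  have htend : Tendsto (fun w => |q.eval w - E w|) l (𝓝 |q.eval 1 - E 1|) := by
    simpa [hE1] using (htend1.sub htend2).abs
  refine le_of_tendsto htend ?_
  filter_upwards [hev] with w hw
  exact le_csSup hA_bdd ⟨_, hznn w hw.1 hw.2, hmem w hw.1 hw.2⟩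

/-- Via the Möbius change of variable z = (1 + ŵ)/(γ(1 - ŵ)) with γ = 1/(n q),
the best concentrated-real-pole rational approximation error ρ_n^t(q) equals the
best polynomial approximation error on [-1, 1] of the transplanted exponential E,
where E(ŵ) = exp(-t (1 + ŵ)/(γ (1 - ŵ))) for ŵ ∈ [-1, 1) and E(1) = 0. -/
theorem rho_eq_polynomial_error (n : ℕ) (hn : 0 < n) (q t : ℝ) (hq : 0 < q) (ht : 0 < t)
    (γ : ℝ) (hγ : γ = 1 / (n * q)) (E : ℝ → ℝ)
    (hE : ∀ w : ℝ, -1 ≤ w → w < 1 → E w = Real.exp (-t * (1 + w) / (γ * (1 - w))))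
    (hE1 : E 1 = 0) :
    rho n t q = sInf {e : ℝ | ∃ p : Polynomial ℝ, p.degree ≤ n ∧
      e = sSup {y : ℝ | ∃ w ∈ Set.Icc (-1 : ℝ) 1, y = |p.eval w - E w|}} := by
  have hn' : (0:ℝ) < (n:ℝ) := by exact_mod_cast hn
  have hγ0 : 0 < γ := by rw [hγ]; positivity
  have hinvγ : 1/γ = (n:ℝ)*q := by rw [hγ, one_div_one_div]
  rw [rho]
  congr 1
  ext e
  simp only [Set.mem_setOf_eq]
  constructor
  · rintro ⟨p, hp, rfl⟩
    refine ⟨Tpoly n γ p, Tpoly_degree_le n γ p, ?_⟩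
    rw [← hinvγ]
    exact sup_corr n γ t hγ0 ht E hE hE1 p (Tpoly n γ p)
      (fun w h1 h2 => Tpoly_eval n γ hγ0 p hp w h1 h2)
  · rintro ⟨p, hp, rfl⟩
    refine ⟨Spoly n γ p, Spoly_degree_le n γ p, ?_⟩
    rw [← hinvγ]
    refine (sup_corr n γ t hγ0 ht E hE hE1 (Spoly n γ p) p ?_).symm
    intro w h1 h2
    have hs : (0:ℝ) < 1 - w := by linarith
    have hz0 : (0:ℝ) ≤ (1+w)/(γ*(1-w)) := div_nonneg (by linarith) (by positivity)
    have hpos : (0:ℝ) < (1+w)/(γ*(1-w)) + 1/γ :=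
      add_pos_of_nonneg_of_pos hz0 (by positivity)
    rw [eq_div_iff (pow_ne_zero _ hpos.ne')]
    exact (Spoly_eval n γ hγ0 p hp w h1 h2).symm
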